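/- Let V, W be closed subspaces of H with H = V ⊕ W⊥ and (W,w) a fusion frame for W with frame operator S_{W,w} = T_{W,w}T*_{W,w}. For any f ∈ H and any (f_i)_{i∈I} ∈ K_W with T_{W,w}(f_i) = π_{W,V⊥} f, one has ‖(f_i)‖² = ‖T*_{W,w} S†_{W,w} π_{W,V⊥} f‖² + ‖(f_i) − T*_{W,w} S†_{W,w} π_{W,V⊥} f‖². In particular the canonical coefficients T*_{W,w} S†_{W,w} π_{W,V⊥} f have minimal norm among all such coefficient sequences. -/

import Mathlib

set_option maxHeartbeats 1000000 in
/-- Let `H = V ⊕ Wᗮ` (equivalently `H = W ⊕ Vᗮ`) and `(W_i,w_i)` a fusion frame for `W`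
with synthesis operator `T_W`, frame operator `S = T_W T_W*` and Moore–Penrose
pseudoinverse `S†`. For any `f ∈ H` and any `c ∈ K_W` with `T_W c = π_{W,Vᗮ} f`,
`‖c‖² = ‖T_W* S† π_{W,Vᗮ} f‖² + ‖c − T_W* S† π_{W,Vᗮ} f‖²`; in particular the
canonical coefficients have minimal norm. -/
theorem canonical_coefficients_minimal_norm
    {H : Type*} [NormedAddCommGroup H] [InnerProductSpace ℂ H] [CompleteSpace H]
    {I : Type*} (V W : Submodule ℂ H) [CompleteSpace V] [CompleteSpace W]
    (hcompl : IsCompl V Wᗮ)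
    (Wi : I → Submodule ℂ H) [∀ i, CompleteSpace (Wi i)] (hWiW : ∀ i, Wi i ≤ W)
    (w : I → ℝ) (hw : ∀ i, 0 < w i)
    (TW : lp (fun i => Wi i) 2 →L[ℂ] H)
    (hTW : ∀ c, HasSum (fun i => w i • (c i : H)) (TW c))
    (hTWrange : LinearMap.range (TW : lp (fun i => Wi i) 2 →ₗ[ℂ] H) = W)
    -- the oblique projection `π_{W,Vᗮ}`:
    (P' : H →L[ℂ] H) (hP'W : ∀ f ∈ W, P' f = f) (hP'V : ∀ f ∈ Vᗮ, P' f = 0)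
    -- `Sd` is the Moore–Penrose pseudoinverse of the frame operator `S = T_W T_W*`:
    (Sd : H →L[ℂ] H)
    (hS1 : ((TW.comp TW.adjoint).comp Sd).comp (TW.comp TW.adjoint) = TW.comp TW.adjoint)
    (hS2 : (Sd.comp (TW.comp TW.adjoint)).comp Sd = Sd)
    (hS3 : ((TW.comp TW.adjoint).comp Sd).adjoint = (TW.comp TW.adjoint).comp Sd)
    (hS4 : (Sd.comp (TW.comp TW.adjoint)).adjoint = Sd.comp (TW.comp TW.adjoint)) :
    ∀ (f : H) (c : lp (fun i => Wi i) 2), TW c = P' f →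
      ‖c‖ ^ 2 = ‖TW.adjoint (Sd (P' f))‖ ^ 2 + ‖c - TW.adjoint (Sd (P' f))‖ ^ 2 := by

  intro f c hc
  set S : H →L[ℂ] H := TW.comp TW.adjoint with hSdef
  set Q : H →L[ℂ] H := S.comp Sd with hQdef
  have hQsa : ∀ a b : H, (inner ℂ (Q a) b : ℂ) = inner ℂ a (Q b) := by
    intro a b
    conv_lhs => rw [← hS3]
    exact ContinuousLinearMap.adjoint_inner_left _ _ _
  have hSsa : ∀ a b : H, (inner ℂ (S a) b : ℂ) = inner ℂ a (S b) := by
    intro a b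
    simp only [hSdef, ContinuousLinearMap.comp_apply]
    rw [← ContinuousLinearMap.adjoint_inner_right, ContinuousLinearMap.adjoint_inner_left]
  have hQS : ∀ y : H, Q (S y) = S y := fun y =>
    congrFun (congrArg DFunLike.coe hS1) y
  have hA : ∀ x : H, S (Q x) = S x := by
    intro x
    apply ext_inner_right ℂ
    intro v
    rw [hSsa, hQsa, hQS v, ← hSsa]
  have hB : ∀ x : H, TW.adjoint (Q x) = TW.adjoint x := by
    intro x
    have hd : S (Q x - x) = 0 := by rw [map_sub, hA x, sub_self]
    have h0 : (inner ℂ (TW.adjoint (Q x - x)) (TW.adjoint (Q x - x)) : ℂ) = 0 := by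
      rw [ContinuousLinearMap.adjoint_inner_left]
      have : TW (TW.adjoint (Q x - x)) = S (Q x - x) := rfl
      rw [this, hd, inner_zero_right]
    have := inner_self_eq_zero.mp h0
    rw [map_sub] at this
    exact sub_eq_zero.mp this
  have hC : Q (TW c) = TW c := by
    have h0 : (inner ℂ (Q (TW c) - TW c) (Q (TW c) - TW c) : ℂ) = 0 := by
      rw [inner_sub_left, hQsa, ← inner_sub_right,
        ← ContinuousLinearMap.adjoint_inner_right]
      rw [map_sub, hB, sub_self, inner_zero_right]
    exact sub_eq_zero.mp (inner_self_eq_zero.mp h0)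
  set g : lp (fun i => Wi i) 2 := TW.adjoint (Sd (P' f)) with hgdef
  have hTg : TW g = P' f := by
    have h1 : TW g = Q (P' f) := rfl
    rw [h1, ← hc, hC, hc]
  have horth : (inner ℂ g (c - g) : ℂ) = 0 := by
    rw [hgdef, ContinuousLinearMap.adjoint_inner_left, map_sub, ← hgdef, hTg, hc,
      sub_self, inner_zero_right]
  have hsplit : c = g + (c - g) := by abel
  calc ‖c‖ ^ 2 = ‖g + (c - g)‖ ^ 2 := by rw [← hsplit]
    _ = ‖g‖ ^ 2 + 2 * RCLike.re (inner ℂ g (c - g) : ℂ) + ‖c - g‖ ^ 2 := norm_add_sq _ _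
    _ = ‖g‖ ^ 2 + ‖c - g‖ ^ 2 := by rw [horth]; simp
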